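/- Every connected paracompact locally small space is Lindelöf: if (X, 𝓛) is a locally small space such that X cannot be written as a disjoint union of two nonempty sets from 𝓛°, and there exists a locally finite subfamily 𝓚 ⊆ 𝓛 covering X, then there exists a countable admissible subfamily of 𝓛 covering X. -/

import Mathlib

open Set

/-- The family of sets compatible with a family `L`:
`L° = {Y : ∀ M ∈ L, Y ∩ M ∈ L}`. -/
def compatible {X : Type*} (L : Set (Set X)) : Set (Set X) :=
  {Y | ∀ M ∈ L, Y ∩ M ∈ L}

/-- The small sets: `Lˢ = {B : ∃ M ∈ L, B ⊆ M}`. -/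
def smalls {X : Type*} (L : Set (Set X)) : Set (Set X) :=
  {B | ∃ M ∈ L, B ⊆ M}

/-- The weakly open sets: `L^wo = {⋃₀ U : U ⊆ L}`. -/
def weaklyOpens {X : Type*} (L : Set (Set X)) : Set (Set X) :=
  {W | ∃ U ⊆ L, W = ⋃₀ U}

/-- `(X, L)` is a locally small space: `∅ ∈ L`, `L` is closed under binary
intersections and unions, and `L` covers `X`. -/
def IsLSS {X : Type*} (L : Set (Set X)) : Prop :=
  ∅ ∈ L ∧ (∀ a ∈ L, ∀ b ∈ L, a ∩ b ∈ L ∧ a ∪ b ∈ L) ∧ ⋃₀ L = Set.univ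

/-- An admissible (locally essentially finite) open family. -/
def Admissible {X : Type*} (L U : Set (Set X)) : Prop :=
  U ⊆ compatible L ∧
    ∀ M ∈ L, ∃ F ⊆ U, F.Finite ∧ (⋃₀ U) ∩ M = (⋃₀ F) ∩ M

/-- Finite unions of members of `L` belong to `L`. -/
lemma finite_sUnion_mem {X : Type*} {L : Set (Set X)} (h : IsLSS L)
    {F : Set (Set X)} (hF : F.Finite) : F ⊆ L → ⋃₀ F ∈ L := by
  refine Set.Finite.induction_on (motive := fun F _ => F ⊆ L → ⋃₀ F ∈ L) F hF (by simpa using h.1) ?_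
  intro a s _ _ ih hsub
  rw [sUnion_insert]
  exact (h.2.1 a (hsub (mem_insert a s)) _ (ih fun y hy => hsub (mem_insert_of_mem a hy))).2

/-- For any subfamily `U` of a locally finite family `K ⊆ L`, the intersection
`(⋃₀ U) ∩ M` equals a finite subunion and belongs to `L`. -/
lemma sUnion_inter_finite {X : Type*} {L K : Set (Set X)} (h : IsLSS L) (hKL : K ⊆ L)
    (hKlf : ∀ M ∈ L, {k ∈ K | (k ∩ M).Nonempty}.Finite)
    {U : Set (Set X)} (hU : U ⊆ K) {M : Set X} (hM : M ∈ L) :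
    ∃ F ⊆ U, F.Finite ∧ (⋃₀ U) ∩ M = (⋃₀ F) ∩ M := by
  refine ⟨{k ∈ U | (k ∩ M).Nonempty}, fun k hk => hk.1,
    ((hKlf M hM).subset fun k hk => ⟨hU hk.1, hk.2⟩), ?_⟩
  ext x
  constructor
  · rintro ⟨⟨k, hkU, hxk⟩, hxM⟩
    exact ⟨⟨k, ⟨hkU, ⟨x, hxk, hxM⟩⟩, hxk⟩, hxM⟩
  · rintro ⟨⟨k, hk, hxk⟩, hxM⟩
    exact ⟨⟨k, hk.1, hxk⟩, hxM⟩

lemma sUnion_inter_mem {X : Type*} {L K : Set (Set X)} (h : IsLSS L) (hKL : K ⊆ L)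
    (hKlf : ∀ M ∈ L, {k ∈ K | (k ∩ M).Nonempty}.Finite)
    {U : Set (Set X)} (hU : U ⊆ K) {M : Set X} (hM : M ∈ L) :
    (⋃₀ U) ∩ M ∈ L := by
  obtain ⟨F, hFU, hFfin, hFeq⟩ := sUnion_inter_finite h hKL hKlf hU hM
  rw [hFeq]
  have : (⋃₀ F) ∩ M = ⋃₀ ((· ∩ M) '' F) := by
    ext x; simp [mem_sUnion]; tauto
  rw [this]
  exact finite_sUnion_mem h (hFfin.image _)
    (by rintro _ ⟨k, hk, rfl⟩; exact (h.2.1 k (hKL (hU (hFU hk))) M hM).1)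

/-- Iterated neighborhoods of `k₀` in the intersection graph of `K`. -/
def chainSet {X : Type*} (K : Set (Set X)) (k₀ : Set X) : ℕ → Set (Set X)
  | 0 => {k₀}
  | n + 1 => chainSet K k₀ n ∪ {k ∈ K | ∃ s ∈ chainSet K k₀ n, (k ∩ s).Nonempty}

theorem connected_paracompact_lindelof {X : Type*} (L : Set (Set X)) (h : IsLSS L)
    (hconn : ¬ ∃ U ∈ compatible L, ∃ V ∈ compatible L,
       U.Nonempty ∧ V.Nonempty ∧ U ∩ V = ∅ ∧ U ∪ V = Set.univ)
    (K : Set (Set X)) (hKL : K ⊆ L)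
    (hKlf : ∀ M ∈ L, {k ∈ K | (k ∩ M).Nonempty}.Finite)
    (hKcov : ⋃₀ K = Set.univ) :
    ∃ C ⊆ L, C.Countable ∧ ⋃₀ C = Set.univ ∧
      ∀ M ∈ L, ∃ F ⊆ C, F.Finite ∧ (⋃₀ C) ∩ M = (⋃₀ F) ∩ M := by
  by_cases hX : ∃ x : X, True
  · obtain ⟨x, -⟩ := hX
    have hx : x ∈ ⋃₀ K := by rw [hKcov]; trivial
    obtain ⟨k₀, hk₀K, hxk₀⟩ := hx
    set C : Set (Set X) := ⋃ n, chainSet K k₀ n with hC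
    have hchainK : ∀ n, chainSet K k₀ n ⊆ K := by
      intro n
      induction n with
      | zero => intro k hk; rw [chainSet, mem_singleton_iff] at hk; subst hk; exact hk₀K
      | succ n ih =>
        rintro k (hk | hk)
        · exact ih hk
        · exact hk.1
    have hCK : C ⊆ K := by
      rintro k hk
      obtain ⟨n, hn⟩ := mem_iUnion.1 hk
      exact hchainK n hn
    have hchainfin : ∀ n, (chainSet K k₀ n).Finite := by
      intro n
      induction n with
      | zero => exact finite_singleton k₀
      | succ n ih =>
        have hbig : (⋃ s ∈ chainSet K k₀ n, {k ∈ K | (k ∩ s).Nonempty}).Finite :=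
          ih.biUnion fun s hs => hKlf s (hKL (hchainK n hs))
        refine ih.union (hbig.subset fun k hk => ?_)
        obtain ⟨hkK, s, hs, hks⟩ := hk
        exact mem_biUnion hs ⟨hkK, hks⟩
    have hCcount : C.Countable := countable_iUnion fun n => (hchainfin n).countable
    -- adjacency absorption
    have habs : ∀ k ∈ K, ∀ s ∈ C, (k ∩ s).Nonempty → k ∈ C := by
      intro k hkK s hsC hks
      obtain ⟨n, hn⟩ := mem_iUnion.1 hsC
      exact mem_iUnion.2 ⟨n + 1, Or.inr ⟨hkK, s, hn, hks⟩⟩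
    -- C covers X, by connectedness
    have hCcov : ⋃₀ C = univ := by
      by_contra hne
      have hVne : (⋃₀ (K \ C)).Nonempty := by
        rcases (ne_univ_iff_exists_notMem _).1 hne with ⟨y, hy⟩
        have : y ∈ ⋃₀ K := by rw [hKcov]; trivial
        obtain ⟨k, hkK, hyk⟩ := this
        refine ⟨y, k, ⟨hkK, fun hkC => hy ⟨k, hkC, hyk⟩⟩, hyk⟩
      refine hconn ⟨⋃₀ C, fun M hM => sUnion_inter_mem h hKL hKlf hCK hM,
        ⋃₀ (K \ C), fun M hM => sUnion_inter_mem h hKL hKlf (diff_subset.trans le_rfl) hM,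
        ⟨x, k₀, mem_iUnion.2 ⟨0, rfl⟩, hxk₀⟩, hVne, ?_, ?_⟩
      · ext y
        simp only [mem_inter_iff, mem_empty_iff_false, iff_false]
        rintro ⟨⟨k, hkC, hyk⟩, ⟨k', ⟨hk'K, hk'C⟩, hyk'⟩⟩
        exact hk'C (habs k' hk'K k hkC ⟨y, hyk', hyk⟩)
      · apply eq_univ_of_univ_subset
        rw [← hKcov]
        rintro y ⟨k, hkK, hyk⟩
        by_cases hkC : k ∈ C
        · exact Or.inl ⟨k, hkC, hyk⟩
        · exact Or.inr ⟨k, ⟨hkK, hkC⟩, hyk⟩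
    exact ⟨C, hCK.trans hKL, hCcount, hCcov,
      fun M hM => sUnion_inter_finite h hKL hKlf hCK hM⟩
  · push_neg at hX
    refine ⟨{∅}, by simpa using h.1, countable_singleton _, ?_, ?_⟩
    · ext y; exact (hX y).elim
    · intro M hM
      exact ⟨{∅}, le_rfl, finite_singleton _, rfl⟩
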